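/- arXiv:2002.12586 — 2 statements merged into one kernel-verified Lean document; each statement's English description precedes it below -/
import Mathlib

section
/- Let X | μ ~ N(μ, σ²) with μ ~ G, and let f(x) = ∫ φ_σ(x − μ) dG(μ) and F(t) = ∫_{−∞}^t f(x) dx denote the marginal density and CDF. Then for any t with F(t) < 1, the expected selection bias of the naive estimator X on the event {X > t} is E[X − μ | X > t] = σ² f(t)/(1 − F(t)). -/
open MeasureTheory Real Filter

/-- The `N(0, σ²)` density. -/
noncomputable def gaussianPdf (σ z : ℝ) : ℝ :=
  (Real.sqrt (2 * Real.pi * σ ^ 2))⁻¹ * Real.exp (-(z ^ 2) / (2 * σ ^ 2))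

lemma inner_integral (σ t μ : ℝ) (hσ : 0 < σ)
    (hint' : Integrable (fun x => (x - μ) * gaussianPdf σ (x - μ))
      (volume.restrict (Set.Ioi t))) :
    (∫ x in Set.Ioi t, (x - μ) * gaussianPdf σ (x - μ)) = σ ^ 2 * gaussianPdf σ (t - μ) := by
  set c : ℝ := (Real.sqrt (2 * Real.pi * σ ^ 2))⁻¹ with hc
  have hσ2 : (σ : ℝ) ^ 2 ≠ 0 := by positivity
  have hderiv : ∀ x ∈ Set.Ici t,
      HasDerivAt (fun x => -σ ^ 2 * (c * Real.exp (-((x - μ) ^ 2) / (2 * σ ^ 2))))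
        ((x - μ) * gaussianPdf σ (x - μ)) x := by
    intro x _
    have h1 : HasDerivAt (fun x : ℝ => -((x - μ) ^ 2) / (2 * σ ^ 2))
        (-(2 * (x - μ)) / (2 * σ ^ 2)) x := by
      have := (((hasDerivAt_id x).sub_const μ).pow 2).neg.div_const (2 * σ ^ 2)
      simpa using this
    have h2 := ((h1.exp.const_mul c).const_mul (-σ ^ 2))
    refine h2.congr_deriv ?_
    rw [gaussianPdf, ← hc]
    field_simp
  have htend : Tendsto (fun x => -σ ^ 2 * (c * Real.exp (-((x - μ) ^ 2) / (2 * σ ^ 2))))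
      atTop (nhds 0) := by
    have hsq : Tendsto (fun x : ℝ => (x - μ) ^ 2) atTop atTop := by
      have h0 : Tendsto (fun x : ℝ => x - μ) atTop atTop :=
        tendsto_atTop_add_const_right _ (-μ) tendsto_id
      exact (tendsto_pow_atTop two_ne_zero).comp h0
    have h1 : Tendsto (fun x : ℝ => -((x - μ) ^ 2) / (2 * σ ^ 2)) atTop atBot := by
      apply Tendsto.atBot_div_const (by positivity)
      exact tendsto_neg_atBot_iff.mpr hsq
    have := ((Real.tendsto_exp_atBot.comp h1).const_mul c).const_mul (-σ ^ 2)
    simpa using this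
  have key := integral_Ioi_of_hasDerivAt_of_tendsto' hderiv hint' htend
  rw [key, gaussianPdf, ← hc]
  ring

/-- **Selection bias of the naive estimator.** For `X | μ ~ N(μ, σ²)`, `μ ~ G`,
with marginal density `f` and CDF `F`, for any `t` with `F t < 1`,
`E[X − μ | X > t] = σ² f(t) / (1 − F t)`.  The conditional expectation is the
joint integral over `{X > t}` normalized by `P(X > t) = 1 − F t`. -/
theorem selection_bias_naive
    (G : Measure ℝ) [IsProbabilityMeasure G] (σ t : ℝ) (hσ : 0 < σ)
    (f F : ℝ → ℝ)
    (hf : ∀ y, f y = ∫ μ, gaussianPdf σ (y - μ) ∂G)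
    (hF : ∀ s, F s = ∫ x in Set.Iic s, f x)
    (hFt : F t < 1)
    (hint : Integrable (fun μ => ∫ x in Set.Ioi t, (x - μ) * gaussianPdf σ (x - μ)) G)
    (hint' : ∀ μ : ℝ, Integrable (fun x => (x - μ) * gaussianPdf σ (x - μ))
      (volume.restrict (Set.Ioi t))) :
    (∫ μ, (∫ x in Set.Ioi t, (x - μ) * gaussianPdf σ (x - μ)) ∂G) / (1 - F t)
      = σ ^ 2 * f t / (1 - F t) := by
  have key : ∀ μ : ℝ, (∫ x in Set.Ioi t, (x - μ) * gaussianPdf σ (x - μ))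
      = σ ^ 2 * gaussianPdf σ (t - μ) := fun μ => inner_integral σ t μ hσ (hint' μ)
  rw [hf]
  congr 1
  calc (∫ μ, (∫ x in Set.Ioi t, (x - μ) * gaussianPdf σ (x - μ)) ∂G)
      = ∫ μ, σ ^ 2 * gaussianPdf σ (t - μ) ∂G := by simp_rw [key]
    _ = σ ^ 2 * ∫ μ, gaussianPdf σ (t - μ) ∂G := integral_const_mul _ _
end

section
/- Let X | μ ~ N(μ, σ²) with μ ~ G, marginal density f(x) = ∫ φ_σ(x − μ) dG(μ) and CDF F. Then for any t with F(t) < 1, E[ f'(X)/f(X) | X > t ] = −f(t)/(1 − F(t)). Consequently the oracle Tweedie estimator δ^π(X) = X + σ² f'(X)/f(X) satisfies E[δ^π(X) − μ | X > t] = 0. -/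
open MeasureTheory Real

lemma gaussianPdf_pos (σ z : ℝ) (hσ : 0 < σ) : 0 < gaussianPdf σ z := by
  unfold gaussianPdf
  positivity

lemma gaussianPdf_continuous (σ : ℝ) : Continuous (gaussianPdf σ) := by
  unfold gaussianPdf
  fun_prop

lemma abs_mul_gaussianPdf_le (σ z : ℝ) (hσ : 0 < σ) :
    |z| * gaussianPdf σ z ≤ σ * (Real.sqrt (2 * Real.pi * σ ^ 2))⁻¹ := by
  unfold gaussianPdf
  have h1 : |z| ≤ σ * Real.exp (z ^ 2 / (2 * σ ^ 2)) := by
    have hexp := Real.add_one_le_exp (z ^ 2 / (2 * σ ^ 2))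
    have h2 : σ * (z ^ 2 / (2 * σ ^ 2) + 1) = (2 * σ ^ 2 + z ^ 2) / (2 * σ) := by
      field_simp; ring
    have ha : |z| ≤ (2 * σ ^ 2 + z ^ 2) / (2 * σ) := by
      rw [le_div_iff₀ (by positivity)]
      nlinarith [sq_nonneg (|z| - σ), sq_abs z]
    have hmul := mul_le_mul_of_nonneg_left hexp hσ.le
    linarith
  have hA : (0:ℝ) ≤ (Real.sqrt (2 * Real.pi * σ ^ 2))⁻¹ := by positivity
  have h3 : |z| * Real.exp (-(z ^ 2) / (2 * σ ^ 2)) ≤ σ := by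
    have := mul_le_mul_of_nonneg_right h1 (Real.exp_pos (-(z ^ 2) / (2 * σ ^ 2))).le
    rw [mul_assoc, ← Real.exp_add] at this
    have : σ * Real.exp (z ^ 2 / (2 * σ ^ 2) + -(z ^ 2) / (2 * σ ^ 2)) = σ := by
      rw [show z ^ 2 / (2 * σ ^ 2) + -(z ^ 2) / (2 * σ ^ 2) = 0 by ring, Real.exp_zero, mul_one]
    linarith [mul_le_mul_of_nonneg_right h1 (Real.exp_pos (-(z ^ 2) / (2 * σ ^ 2))).le,
      (by rw [mul_assoc, ← Real.exp_add, show z ^ 2 / (2 * σ ^ 2) + -(z ^ 2) / (2 * σ ^ 2) = 0 by ring, Real.exp_zero, mul_one] :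
        σ * Real.exp (z ^ 2 / (2 * σ ^ 2)) * Real.exp (-(z ^ 2) / (2 * σ ^ 2)) = σ)]
  calc |z| * ((Real.sqrt (2 * Real.pi * σ ^ 2))⁻¹ * Real.exp (-(z ^ 2) / (2 * σ ^ 2)))
      = (|z| * Real.exp (-(z ^ 2) / (2 * σ ^ 2))) * (Real.sqrt (2 * Real.pi * σ ^ 2))⁻¹ := by ring
    _ ≤ σ * (Real.sqrt (2 * Real.pi * σ ^ 2))⁻¹ := mul_le_mul_of_nonneg_right h3 hA

lemma gaussianPdf_hasDerivAt (σ m x : ℝ) (hσ : 0 < σ) :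
    HasDerivAt (fun y => gaussianPdf σ (y - m))
      (-(x - m) / σ ^ 2 * gaussianPdf σ (x - m)) x := by
  unfold gaussianPdf
  have h : HasDerivAt (fun y => -((y - m) ^ 2) / (2 * σ ^ 2)) (-(x - m) / σ ^ 2) x := by
    have h1 : HasDerivAt (fun y => -((y - m) ^ 2) / (2 * σ ^ 2))
        ((-(2 * (x - m) * 1)) / (2 * σ ^ 2)) x := by
      have := ((hasDerivAt_id x).sub_const m).pow 2
      simpa using (this.neg.div_const (2 * σ ^ 2))
    convert h1 using 1
    field_simp
  have := (h.exp).const_mul (Real.sqrt (2 * Real.pi * σ ^ 2))⁻¹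
  exact this.congr_deriv (by ring)

lemma integrable_gaussianPdf (σ : ℝ) (hσ : 0 < σ) : Integrable (gaussianPdf σ) := by
  unfold gaussianPdf
  refine Integrable.const_mul ?_ _
  have hb : 0 < (2 * σ ^ 2)⁻¹ := by positivity
  have := integrable_exp_neg_mul_sq hb
  refine this.congr (Filter.Eventually.of_forall fun x => ?_)
  simp only
  congr 1; field_simp

lemma integrable_mul_gaussianPdf (σ : ℝ) (hσ : 0 < σ) :
    Integrable (fun z => z * gaussianPdf σ z) := by
  unfold gaussianPdf
  have hb : 0 < (2 * σ ^ 2)⁻¹ := by positivity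
  have := (integrable_mul_exp_neg_mul_sq hb).const_mul (Real.sqrt (2 * Real.pi * σ ^ 2))⁻¹
  refine this.congr (Filter.Eventually.of_forall fun x => ?_)
  simp only
  rw [show -x ^ 2 / (2 * σ ^ 2) = -((2 * σ ^ 2)⁻¹ * x ^ 2) by field_simp]
  ring

lemma gaussianPdf_le (σ z : ℝ) (hσ : 0 < σ) :
    gaussianPdf σ z ≤ (Real.sqrt (2 * Real.pi * σ ^ 2))⁻¹ := by
  unfold gaussianPdf
  have : Real.exp (-(z ^ 2) / (2 * σ ^ 2)) ≤ 1 := by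
    rw [Real.exp_le_one_iff]
    have : 0 ≤ z ^ 2 / (2 * σ ^ 2) := by positivity
    linarith [this, (by ring : -(z ^ 2) / (2 * σ ^ 2) = -(z ^ 2 / (2 * σ ^ 2)))]
  nlinarith [Real.sqrt_nonneg (2 * Real.pi * σ ^ 2), inv_nonneg.2 (Real.sqrt_nonneg (2 * Real.pi * σ ^ 2))]

lemma integrable_gaussianPdf_shift (G : Measure ℝ) [IsProbabilityMeasure G] (σ x : ℝ)
    (hσ : 0 < σ) : Integrable (fun m => gaussianPdf σ (x - m)) G := by
  refine Integrable.mono' (integrable_const ((Real.sqrt (2 * Real.pi * σ ^ 2))⁻¹)) ?_ ?_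
  · exact ((gaussianPdf_continuous σ).comp (continuous_const.sub continuous_id)).aestronglyMeasurable
  · refine Filter.Eventually.of_forall fun m => ?_
    rw [Real.norm_of_nonneg (gaussianPdf_pos σ _ hσ).le]
    exact gaussianPdf_le σ _ hσ

lemma f_hasDerivAt (G : Measure ℝ) [IsProbabilityMeasure G] (σ x : ℝ) (hσ : 0 < σ) :
    HasDerivAt (fun y => ∫ m, gaussianPdf σ (y - m) ∂G)
      (∫ m, -(x - m) / σ ^ 2 * gaussianPdf σ (x - m) ∂G) x := by
  set A := (Real.sqrt (2 * Real.pi * σ ^ 2))⁻¹ with hA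
  have key := hasDerivAt_integral_of_dominated_loc_of_deriv_le (μ := G)
    (F := fun y m => gaussianPdf σ (y - m))
    (F' := fun y m => -(y - m) / σ ^ 2 * gaussianPdf σ (y - m))
    (x₀ := x) (bound := fun _ => σ * A / σ ^ 2) (s := Metric.ball x 1) (Metric.ball_mem_nhds x one_pos)
    (Filter.Eventually.of_forall fun y =>
      (integrable_gaussianPdf_shift G σ y hσ).aestronglyMeasurable)
    (integrable_gaussianPdf_shift G σ x hσ)
    ?_ ?_ (integrable_const _) ?_
  · exact key.2
  · refine (AEMeasurable.aestronglyMeasurable ?_)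
    refine Measurable.aemeasurable ?_
    have : Continuous fun m => -(x - m) / σ ^ 2 * gaussianPdf σ (x - m) := by
      refine Continuous.mul (by fun_prop) ?_
      exact (gaussianPdf_continuous σ).comp (continuous_const.sub continuous_id)
    exact this.measurable
  · refine Filter.Eventually.of_forall fun m => fun y _ => ?_
    rw [norm_mul, Real.norm_of_nonneg (gaussianPdf_pos σ _ hσ).le]
    have h1 : ‖-(y - m) / σ ^ 2‖ = |y - m| / σ ^ 2 := by
      rw [norm_div, norm_neg, Real.norm_of_nonneg (by positivity : (0:ℝ) ≤ σ ^ 2)]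
      rfl
    rw [h1, div_mul_eq_mul_div, div_le_div_iff_of_pos_right (by positivity)]
    exact abs_mul_gaussianPdf_le σ (y - m) hσ
  · exact Filter.Eventually.of_forall fun m => fun y _ => gaussianPdf_hasDerivAt σ m y hσ

/-- **Unbiasedness of the oracle Tweedie estimator under selection.**
`E[f'(X)/f(X) | X > t] = −f(t)/(1 − F t)`, and consequently the oracle estimator
`δπ(x) = x + σ² f'(x)/f(x)` satisfies `E[δπ(X) − μ | X > t] = 0`. -/
theorem tweedie_selection_unbiased
    (G : Measure ℝ) [IsProbabilityMeasure G] (σ t : ℝ) (hσ : 0 < σ)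
    (f F : ℝ → ℝ)
    (hf : ∀ y, f y = ∫ μ, gaussianPdf σ (y - μ) ∂G)
    (hF : ∀ s, F s = ∫ x in Set.Iic s, f x)
    (hFt : F t < 1)
    (hfpos : ∀ y, 0 < f y)
    (hfdiff : Differentiable ℝ f)
    (hflim : Filter.Tendsto f Filter.atTop (nhds 0))
    (hfint : Integrable (deriv f) (volume.restrict (Set.Ioi t)))
    (hint : Integrable (fun μ => ∫ x in Set.Ioi t,
      (x + σ ^ 2 * deriv f x / f x - μ) * gaussianPdf σ (x - μ)) G)
    (hint' : ∀ μ : ℝ, Integrable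
      (fun x => (x + σ ^ 2 * deriv f x / f x - μ) * gaussianPdf σ (x - μ))
      (volume.restrict (Set.Ioi t))) :
    (∫ x in Set.Ioi t, (deriv f x / f x) * f x) / (1 - F t) = -(f t) / (1 - F t)
    ∧ (∫ μ, (∫ x in Set.Ioi t,
        (x + σ ^ 2 * deriv f x / f x - μ) * gaussianPdf σ (x - μ)) ∂G) / (1 - F t)
      = 0 := by
  have hσ2 : (σ : ℝ) ^ 2 ≠ 0 := by positivity
  have hfe : f = fun y => ∫ m, gaussianPdf σ (y - m) ∂G := funext hf
  have hderiv : ∀ x, deriv f x = ∫ m, -(x - m) / σ ^ 2 * gaussianPdf σ (x - m) ∂G := by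
    intro x
    have : HasDerivAt f (∫ m, -(x - m) / σ ^ 2 * gaussianPdf σ (x - m) ∂G) x := by
      rw [hfe]; exact f_hasDerivAt G σ x hσ
    exact this.deriv
  have hFTC : (∫ x in Set.Ioi t, deriv f x) = -f t := by
    have := integral_Ioi_of_hasDerivAt_of_tendsto' (a := t) (f := f) (f' := deriv f) (m := 0)
      (fun x _ => (hfdiff x).hasDerivAt) hfint hflim
    simpa using this
  constructor
  · have h1 : ∀ x, deriv f x / f x * f x = deriv f x :=
      fun x => div_mul_cancel₀ _ (hfpos x).ne'
    rw [show (∫ x in Set.Ioi t, deriv f x / f x * f x) = ∫ x in Set.Ioi t, deriv f x from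
      integral_congr_ae (Filter.Eventually.of_forall fun x => h1 x), hFTC]
  · -- piece integrabilities
    have hg1vol : ∀ μ : ℝ, Integrable (fun x => (x - μ) * gaussianPdf σ (x - μ)) := by
      intro μ
      exact (integrable_mul_gaussianPdf σ hσ).comp_sub_right μ
    have hg1 : ∀ μ : ℝ, Integrable (fun x => (x - μ) * gaussianPdf σ (x - μ))
        (volume.restrict (Set.Ioi t)) := fun μ => (hg1vol μ).restrict
    have hg2 : ∀ μ : ℝ, Integrable (fun x => σ ^ 2 * deriv f x / f x * gaussianPdf σ (x - μ))
        (volume.restrict (Set.Ioi t)) := by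
      intro μ
      refine ((hint' μ).sub (hg1 μ)).congr (Filter.Eventually.of_forall fun x => ?_)
      simp only [Pi.sub_apply]
      ring
    have hsplit : ∀ μ : ℝ,
        (∫ x in Set.Ioi t, (x + σ ^ 2 * deriv f x / f x - μ) * gaussianPdf σ (x - μ))
          = (∫ x in Set.Ioi t, (x - μ) * gaussianPdf σ (x - μ))
            + ∫ x in Set.Ioi t, σ ^ 2 * deriv f x / f x * gaussianPdf σ (x - μ) := by
      intro μ
      rw [← integral_add (hg1 μ) (hg2 μ)]
      refine integral_congr_ae (Filter.Eventually.of_forall fun x => ?_)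
      simp only [Pi.add_apply]
      ring
    -- product integrability of the first piece over G.prod (restrict)
    have hk1m : AEStronglyMeasurable
        (Function.uncurry fun (μ x : ℝ) => (x - μ) * gaussianPdf σ (x - μ))
        (G.prod (volume.restrict (Set.Ioi t))) := by
      apply Continuous.aestronglyMeasurable
      exact (continuous_snd.sub continuous_fst).mul
        ((gaussianPdf_continuous σ).comp (continuous_snd.sub continuous_fst))
    have hnorm1 : ∀ μ : ℝ, (∫ x in Set.Ioi t, ‖(x - μ) * gaussianPdf σ (x - μ)‖)
        ≤ ∫ z, ‖z * gaussianPdf σ z‖ := by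
      intro μ
      have h1 : (∫ x in Set.Ioi t, ‖(x - μ) * gaussianPdf σ (x - μ)‖)
          ≤ ∫ x, ‖(x - μ) * gaussianPdf σ (x - μ)‖ :=
        setIntegral_le_integral (hg1vol μ).norm
          (Filter.Eventually.of_forall fun x => norm_nonneg _)
      exact h1.trans_eq (integral_sub_right_eq_self (fun z => ‖z * gaussianPdf σ z‖) μ)
    have hk1 : Integrable (Function.uncurry fun (μ x : ℝ) => (x - μ) * gaussianPdf σ (x - μ))
        (G.prod (volume.restrict (Set.Ioi t))) := by
      refine (integrable_prod_iff hk1m).2 ⟨Filter.Eventually.of_forall fun μ => hg1 μ, ?_⟩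
      refine Integrable.mono' (integrable_const (∫ z, ‖z * gaussianPdf σ z‖))
        hk1m.norm.integral_prod_right' (Filter.Eventually.of_forall fun μ => ?_)
      rw [Real.norm_of_nonneg (integral_nonneg fun x => norm_nonneg _)]
      exact hnorm1 μ
    have hI1int : Integrable (fun μ => ∫ x in Set.Ioi t, (x - μ) * gaussianPdf σ (x - μ)) G :=
      hk1.integral_prod_left
    have hswap1 : (∫ μ, (∫ x in Set.Ioi t, (x - μ) * gaussianPdf σ (x - μ)) ∂G)
        = ∫ x in Set.Ioi t, ∫ μ, (x - μ) * gaussianPdf σ (x - μ) ∂G :=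
      integral_integral_swap hk1
    have htw : ∀ x, (∫ μ, (x - μ) * gaussianPdf σ (x - μ) ∂G) = -σ ^ 2 * deriv f x := by
      intro x
      rw [hderiv x, ← integral_const_mul]
      refine integral_congr_ae (Filter.Eventually.of_forall fun μ => ?_)
      field_simp
    have hint1 : (∫ μ, (∫ x in Set.Ioi t, (x - μ) * gaussianPdf σ (x - μ)) ∂G)
        = σ ^ 2 * f t := by
      rw [hswap1,
        show (∫ x in Set.Ioi t, ∫ μ, (x - μ) * gaussianPdf σ (x - μ) ∂G)
          = ∫ x in Set.Ioi t, -σ ^ 2 * deriv f x from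
        integral_congr_ae (Filter.Eventually.of_forall fun x => htw x),
        integral_const_mul, hFTC]
      ring
    -- product integrability of the second piece over (restrict).prod G
    have hφG : ∀ x : ℝ, Integrable (fun μ => gaussianPdf σ (x - μ)) G :=
      fun x => integrable_gaussianPdf_shift G σ x hσ
    have hk2m : AEStronglyMeasurable
        (Function.uncurry fun (x μ : ℝ) => σ ^ 2 * deriv f x / f x * gaussianPdf σ (x - μ))
        ((volume.restrict (Set.Ioi t)).prod G) := by
      apply Measurable.aestronglyMeasurable
      exact ((((measurable_deriv f).const_mul (σ ^ 2)).div
        hfdiff.continuous.measurable).comp measurable_fst).mul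
        ((gaussianPdf_continuous σ).measurable.comp (measurable_fst.sub measurable_snd))
    have hnormG : ∀ x, (∫ μ, ‖σ ^ 2 * deriv f x / f x * gaussianPdf σ (x - μ)‖ ∂G)
        = σ ^ 2 * |deriv f x| := by
      intro x
      have heq : ∀ μ : ℝ, ‖σ ^ 2 * deriv f x / f x * gaussianPdf σ (x - μ)‖
          = |σ ^ 2 * deriv f x / f x| * gaussianPdf σ (x - μ) := by
        intro μ
        rw [norm_mul, Real.norm_of_nonneg (gaussianPdf_pos σ _ hσ).le]
        rfl
      rw [integral_congr_ae (Filter.Eventually.of_forall heq), integral_const_mul, ← hf x,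
        abs_div, abs_of_pos (hfpos x), div_mul_cancel₀ _ (hfpos x).ne', abs_mul,
        abs_of_pos (show (0:ℝ) < σ ^ 2 by positivity)]
    have hk2 : Integrable
        (Function.uncurry fun (x μ : ℝ) => σ ^ 2 * deriv f x / f x * gaussianPdf σ (x - μ))
        ((volume.restrict (Set.Ioi t)).prod G) := by
      refine (integrable_prod_iff hk2m).2
        ⟨Filter.Eventually.of_forall fun x => (hφG x).const_mul (σ ^ 2 * deriv f x / f x), ?_⟩
      refine ((hfint.abs.const_mul (σ ^ 2)).congr (Filter.Eventually.of_forall fun x => ?_))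
      exact (hnormG x).symm
    have hswap2 : (∫ x in Set.Ioi t, ∫ μ, σ ^ 2 * deriv f x / f x * gaussianPdf σ (x - μ) ∂G)
        = ∫ μ, (∫ x in Set.Ioi t, σ ^ 2 * deriv f x / f x * gaussianPdf σ (x - μ)) ∂G :=
      integral_integral_swap hk2
    have hint2 : (∫ μ, (∫ x in Set.Ioi t, σ ^ 2 * deriv f x / f x * gaussianPdf σ (x - μ)) ∂G)
        = -(σ ^ 2 * f t) := by
      rw [← hswap2]
      have heq : ∀ x, (∫ μ, σ ^ 2 * deriv f x / f x * gaussianPdf σ (x - μ) ∂G)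
          = σ ^ 2 * deriv f x := by
        intro x
        rw [integral_const_mul, ← hf x, div_mul_cancel₀ _ (hfpos x).ne']
      rw [show (∫ x in Set.Ioi t, ∫ μ, σ ^ 2 * deriv f x / f x * gaussianPdf σ (x - μ) ∂G)
          = ∫ x in Set.Ioi t, σ ^ 2 * deriv f x from
        integral_congr_ae (Filter.Eventually.of_forall fun x => heq x),
        integral_const_mul, hFTC]
      ring
    have hI2int : Integrable
        (fun μ => ∫ x in Set.Ioi t, σ ^ 2 * deriv f x / f x * gaussianPdf σ (x - μ)) G := by
      refine (hint.sub hI1int).congr (Filter.Eventually.of_forall fun μ => ?_)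
      simp only [Pi.sub_apply]
      rw [hsplit μ]
      ring
    have hM : (∫ μ, (∫ x in Set.Ioi t,
        (x + σ ^ 2 * deriv f x / f x - μ) * gaussianPdf σ (x - μ)) ∂G) = 0 := by
      rw [integral_congr_ae (Filter.Eventually.of_forall hsplit),
        integral_add hI1int hI2int, hint1, hint2]
      ring
    rw [hM, zero_div]
end
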